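/- Let n ≥ 1 and let L0 = UΣVᵀ be a rank-r matrix with reduced SVD, T the associated tangent subspace, S0 a matrix with support subspace Ω, M = L0 + S0, Q a linear subspace of ℝ^{n×n}, Γ = Q ∩ T^⊥, τ > 0, and 0 < λ < 1. Assume ‖P_Ω P_{Γ^⊥}‖ ≤ 1/2 and that there exist W, F, D ∈ ℝ^{n×n} and α, β > 0 such that UVᵀ + W + (1/τ)L0 = λ(sgn(S0) + F + P_Ω D) + (1/τ)S0, this matrix lies in Q, P_T W = 0, ‖W‖ ≤ β, P_Ω F = 0, ‖F‖_∞ ≤ β, and ‖P_Ω D‖_F ≤ α. Define f(L,S) = ‖L‖_* + λ‖S‖_1 + (1/(2τ))‖L‖_F² + (1/(2τ))‖S‖_F². Then for all H_L, H_S ∈ ℝ^{n×n} with P_Q H_L = P_Q H_S, f(L0 + H_L, S0 − H_S) ≥ f(L0, S0) + (1 − β − 2αλ)‖P_{T^⊥} H_L‖_* + (1 − β − α)λ‖P_{Ω^⊥} H_S‖_1. -/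

import Mathlib

open scoped BigOperators Matrix

abbrev Mat (n : ℕ) := Matrix (Fin n) (Fin n) ℝ

/-- Trace (Frobenius) inner product `⟨X, Y⟩ = trace (Xᵀ Y)`. -/
def finner {n : ℕ} (X Y : Mat n) : ℝ := ∑ i, ∑ j, X i j * Y i j

/-- Frobenius norm. -/
noncomputable def fnorm {n : ℕ} (X : Mat n) : ℝ := Real.sqrt (finner X X)

/-- Entrywise ℓ¹ norm. -/
def l1Norm {n : ℕ} (X : Mat n) : ℝ := ∑ i, ∑ j, |X i j|

/-- Entrywise ℓ∞ norm. -/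
noncomputable def linfNorm {n : ℕ} (X : Mat n) : ℝ := ⨆ p : Fin n × Fin n, |X p.1 p.2|

/-- Spectral (ℓ² operator) norm. -/
noncomputable def specNorm {n : ℕ} (X : Mat n) : ℝ := ‖Matrix.toEuclideanCLM (𝕜 := ℝ) X‖

/-- Nuclear norm: the sum of the singular values, i.e. of the square roots of the
eigenvalues of `Xᵀ * X`. -/
noncomputable def nucNorm {n : ℕ} (X : Mat n) : ℝ :=
  ∑ i, Real.sqrt (((by simpa [Matrix.conjTranspose_eq_transpose_of_trivial] using
    Matrix.isHermitian_conjTranspose_mul_self X : (Xᵀ * X).IsHermitian)).eigenvalues i)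

/-- Operator norm of a linear map on matrix space, w.r.t. the Frobenius norm:
`sup {‖A X‖_F : ‖X‖_F = 1}`. -/
noncomputable def opNorm {n : ℕ} (A : Mat n →ₗ[ℝ] Mat n) : ℝ :=
  sSup {c : ℝ | ∃ X : Mat n, fnorm X = 1 ∧ c = fnorm (A X)}

/-- `P` is the orthogonal projection onto the subspace `V` (w.r.t. the trace inner product). -/
def IsOrthProj {n : ℕ} (V : Submodule ℝ (Mat n)) (P : Mat n →ₗ[ℝ] Mat n) : Prop :=
  (∀ X, P X ∈ V) ∧ (∀ X ∈ V, P X = X) ∧ (∀ X, ∀ Y ∈ V, finner (X - P X) Y = 0)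

/-- Orthogonal complement of a subspace of matrix space w.r.t. the trace inner product. -/
def orthComp {n : ℕ} (V : Submodule ℝ (Mat n)) : Submodule ℝ (Mat n) where
  carrier := {X | ∀ Y ∈ V, finner X Y = 0}
  zero_mem' := by intro Y hY; simp [finner]
  add_mem' := by
    intro a b ha hb Y hY
    have h1 := ha Y hY
    have h2 := hb Y hY
    simp only [finner, Matrix.add_apply, add_mul, Finset.sum_add_distrib] at *
    rw [h1, h2]; ring
  smul_mem' := by
    intro c a ha Y hY
    have h1 := ha Y hY
    simp only [finner, Matrix.smul_apply, smul_eq_mul, mul_assoc, ← Finset.mul_sum] at *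
    rw [h1]; ring

/-- The tangent space `T = {U Xᵀ + Y Vᵀ}` associated with the reduced SVD `L₀ = U Σ Vᵀ`. -/
def tangentT {n r : ℕ} (U V : Matrix (Fin n) (Fin r) ℝ) : Submodule ℝ (Mat n) where
  carrier := {A | ∃ X Y : Matrix (Fin n) (Fin r) ℝ, A = U * Xᵀ + Y * Vᵀ}
  zero_mem' := ⟨0, 0, by simp⟩
  add_mem' := by
    rintro a b ⟨X1, Y1, rfl⟩ ⟨X2, Y2, rfl⟩
    exact ⟨X1 + X2, Y1 + Y2, by rw [Matrix.transpose_add, Matrix.mul_add, Matrix.add_mul]; abel⟩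
  smul_mem' := by
    rintro c a ⟨X1, Y1, rfl⟩
    exact ⟨c • X1, c • Y1,
      by rw [Matrix.transpose_smul, Matrix.mul_smul, Matrix.smul_mul, smul_add]⟩

/-- The support subspace `Ω` of `S₀`: matrices vanishing wherever `S₀` vanishes. -/
def suppSub {n : ℕ} (S0 : Mat n) : Submodule ℝ (Mat n) where
  carrier := {X | ∀ i j, S0 i j = 0 → X i j = 0}
  zero_mem' := by intro i j _; rfl
  add_mem' := by
    intro a b ha hb i j h
    simp [Matrix.add_apply, ha i j h, hb i j h]
  smul_mem' := by
    intro c a ha i j h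
    simp [Matrix.smul_apply, ha i j h]

/-- Entrywise sign matrix. -/
noncomputable def sgnMat {n : ℕ} (S : Mat n) : Mat n := Matrix.of fun i j => Real.sign (S i j)


namespace Stmt8

open Matrix Finset

variable {n : ℕ}

lemma finner_comm (X Y : Mat n) : finner X Y = finner Y X := by
  unfold finner; congr 1; ext i; congr 1; ext j; ring

lemma finner_eq_sum_prod (X Y : Mat n) :
    finner X Y = ∑ p : Fin n × Fin n, X p.1 p.2 * Y p.1 p.2 := by
  rw [finner, ← Finset.sum_product']; rfl

lemma finner_add_left (X Y Z : Mat n) : finner (X + Y) Z = finner X Z + finner Y Z := by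
  simp [finner, Matrix.add_apply, add_mul, Finset.sum_add_distrib]

lemma finner_add_right (X Y Z : Mat n) : finner X (Y + Z) = finner X Y + finner X Z := by
  rw [finner_comm, finner_add_left, finner_comm Y X, finner_comm Z X]

lemma finner_smul_left (c : ℝ) (X Y : Mat n) : finner (c • X) Y = c * finner X Y := by
  simp [finner, Matrix.smul_apply, Finset.mul_sum, mul_assoc]

lemma finner_smul_right (c : ℝ) (X Y : Mat n) : finner X (c • Y) = c * finner X Y := by
  rw [finner_comm, finner_smul_left, finner_comm Y X]

lemma finner_neg_left (X Y : Mat n) : finner (-X) Y = - finner X Y := by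
  have := finner_smul_left (-1) X Y; simpa using this

lemma finner_sub_left (X Y Z : Mat n) : finner (X - Y) Z = finner X Z - finner Y Z := by
  have h := finner_add_left X (-Y) Z
  rw [finner_neg_left] at h
  simpa [sub_eq_add_neg] using h

lemma finner_sub_right (X Y Z : Mat n) : finner X (Y - Z) = finner X Y - finner X Z := by
  rw [finner_comm, finner_sub_left, finner_comm Y X, finner_comm Z X]

lemma finner_zero_left (X : Mat n) : finner 0 X = 0 := by simp [finner]

lemma finner_zero_right (X : Mat n) : finner X 0 = 0 := by simp [finner]

lemma finner_sum_left {ι : Type*} (s : Finset ι) (f : ι → Mat n) (Y : Mat n) :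
    finner (∑ i ∈ s, f i) Y = ∑ i ∈ s, finner (f i) Y := by
  classical
  induction s using Finset.induction with
  | empty => simp [finner_zero_left]
  | insert a s' h ih =>
                   rw [Finset.sum_insert h, Finset.sum_insert h, finner_add_left, ih]

lemma finner_self_nonneg (X : Mat n) : 0 ≤ finner X X := by
  apply Finset.sum_nonneg; intro i _; apply Finset.sum_nonneg; intro j _; exact mul_self_nonneg _

lemma finner_self_eq_zero {X : Mat n} (h : finner X X = 0) : X = 0 := by
  ext i j
  have h1 : ∀ i ∈ Finset.univ (α := Fin n), (0:ℝ) ≤ ∑ j, X i j * X i j :=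
    fun i _ => Finset.sum_nonneg fun j _ => mul_self_nonneg _
  have h2 := (Finset.sum_eq_zero_iff_of_nonneg h1).1 h i (Finset.mem_univ i)
  have h3 := (Finset.sum_eq_zero_iff_of_nonneg
    (fun j _ => mul_self_nonneg (X i j))).1 h2 j (Finset.mem_univ j)
  have := mul_self_eq_zero.1 h3
  simpa using this

lemma fnorm_nonneg (X : Mat n) : 0 ≤ fnorm X := Real.sqrt_nonneg _

lemma fnorm_sq (X : Mat n) : fnorm X ^ 2 = finner X X := Real.sq_sqrt (finner_self_nonneg X)

lemma fnorm_zero : fnorm (0 : Mat n) = 0 := by simp [fnorm, finner_zero_left]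

lemma fnorm_eq_zero {X : Mat n} (h : fnorm X = 0) : X = 0 := by
  apply finner_self_eq_zero
  have := fnorm_sq X
  rw [h] at this; simpa using this.symm

lemma fnorm_smul (c : ℝ) (X : Mat n) : fnorm (c • X) = |c| * fnorm X := by
  have h1 : fnorm (c • X) = Real.sqrt (c^2 * finner X X) := by
    rw [fnorm, finner_smul_left, finner_smul_right]; congr 1; ring
  rw [h1, Real.sqrt_mul (sq_nonneg c), Real.sqrt_sq_eq_abs]; rfl

lemma finner_abs_le (X Y : Mat n) : |finner X Y| ≤ fnorm X * fnorm Y := by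
  have cs := Finset.sum_mul_sq_le_sq_mul_sq Finset.univ
    (fun p : Fin n × Fin n => X p.1 p.2) (fun p : Fin n × Fin n => Y p.1 p.2)
  rw [← finner_eq_sum_prod] at cs
  have hXX : ∑ p : Fin n × Fin n, X p.1 p.2 ^ 2 = finner X X := by
    rw [finner_eq_sum_prod]; congr 1; ext p; ring
  have hYY : ∑ p : Fin n × Fin n, Y p.1 p.2 ^ 2 = finner Y Y := by
    rw [finner_eq_sum_prod]; congr 1; ext p; ring
  rw [hXX, hYY] at cs
  have h1 : |finner X Y| = Real.sqrt ((finner X Y) ^ 2) := by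
    rw [Real.sqrt_sq_eq_abs]
  rw [h1, fnorm, fnorm, ← Real.sqrt_mul (finner_self_nonneg X)]
  exact Real.sqrt_le_sqrt cs

lemma finner_le_fnorm_mul (X Y : Mat n) : finner X Y ≤ fnorm X * fnorm Y :=
  le_trans (le_abs_self _) (finner_abs_le X Y)

lemma fnorm_add_le (X Y : Mat n) : fnorm (X + Y) ≤ fnorm X + fnorm Y := by
  have h1 : finner (X+Y) (X+Y) = finner X X + 2 * finner X Y + finner Y Y := by
    rw [finner_add_left, finner_add_right, finner_add_right, finner_comm Y X]; ring
  have h2 : finner (X+Y) (X+Y) ≤ (fnorm X + fnorm Y)^2 := by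
    rw [h1]
    have := finner_le_fnorm_mul X Y
    have hx := fnorm_sq X; have hy := fnorm_sq Y
    nlinarith
  rw [fnorm]
  calc Real.sqrt (finner (X+Y) (X+Y)) ≤ Real.sqrt ((fnorm X + fnorm Y)^2) :=
        Real.sqrt_le_sqrt h2
    _ = fnorm X + fnorm Y := by
        rw [Real.sqrt_sq (add_nonneg (fnorm_nonneg X) (fnorm_nonneg Y))]

lemma fnorm_sub_le_of_pyth (X Y : Mat n) (h : finner (X - Y) Y = 0) : fnorm Y ≤ fnorm X ∧ fnorm (X - Y) ≤ fnorm X := by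
  have key : finner X X = finner (X - Y) (X - Y) + finner Y Y := by
    have e : (X - Y) + Y = X := by abel
    calc finner X X = finner ((X-Y) + Y) ((X-Y)+Y) := by rw [e]
      _ = finner (X-Y) (X-Y) + finner (X-Y) Y + (finner Y (X-Y) + finner Y Y) := by
          rw [finner_add_left, finner_add_right, finner_add_right]
      _ = finner (X-Y) (X-Y) + finner Y Y := by
          rw [h, finner_comm Y (X-Y), h]; ring
  constructor
  · have : finner Y Y ≤ finner X X := by
      rw [key]; have := finner_self_nonneg (X - Y); linarith
    exact Real.sqrt_le_sqrt this
  · have : finner (X-Y) (X-Y) ≤ finner X X := by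
      rw [key]; have := finner_self_nonneg Y; linarith
    exact Real.sqrt_le_sqrt this

end Stmt8

namespace Stmt8

variable {n : ℕ}

lemma finner_eq_trace (X Y : Mat n) : finner X Y = Matrix.trace (Xᵀ * Y) := by
  rw [finner, Matrix.trace]
  simp only [Matrix.diag, Matrix.mul_apply, Matrix.transpose_apply]
  exact Finset.sum_comm

lemma trace_transpose_mul_self_eq_zero {m k : ℕ} (M : Matrix (Fin m) (Fin k) ℝ)
    (h : Matrix.trace (Mᵀ * M) = 0) : M = 0 := by
  have hrep : Matrix.trace (Mᵀ * M) = ∑ j, ∑ i, M i j * M i j := by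
    rw [Matrix.trace]
    simp only [Matrix.diag, Matrix.mul_apply, Matrix.transpose_apply]
  rw [hrep] at h
  ext i j
  have h1 : ∀ j ∈ Finset.univ (α := Fin k), (0:ℝ) ≤ ∑ i, M i j * M i j :=
    fun j _ => Finset.sum_nonneg fun i _ => mul_self_nonneg _
  have h2 := (Finset.sum_eq_zero_iff_of_nonneg h1).1 h j (Finset.mem_univ j)
  have h3 := (Finset.sum_eq_zero_iff_of_nonneg
    (fun i _ => mul_self_nonneg (M i j))).1 h2 i (Finset.mem_univ i)
  simpa using mul_self_eq_zero.1 h3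

lemma finner_vecMulVec_left (a b : Fin n → ℝ) (X : Mat n) :
    finner (Matrix.vecMulVec a b) X = a ⬝ᵥ (X *ᵥ b) := by
  simp only [finner, Matrix.vecMulVec_apply, dotProduct, Matrix.mulVec, Finset.mul_sum]
  congr 1; ext i; congr 1; ext j; ring

lemma mem_orthComp {V : Submodule ℝ (Mat n)} {X : Mat n} :
    X ∈ orthComp V ↔ ∀ Y ∈ V, finner X Y = 0 := Iff.rfl

section Proj
variable {V : Submodule ℝ (Mat n)} {P : Mat n →ₗ[ℝ] Mat n}

lemma proj_fnorm_le (hP : IsOrthProj V P) (X : Mat n) : fnorm (P X) ≤ fnorm X :=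
  (fnorm_sub_le_of_pyth X (P X) (hP.2.2 X (P X) (hP.1 X))).1

lemma proj_compl_fnorm_le (hP : IsOrthProj V P) (X : Mat n) : fnorm (X - P X) ≤ fnorm X :=
  (fnorm_sub_le_of_pyth X (P X) (hP.2.2 X (P X) (hP.1 X))).2

lemma proj_eq_of (hP : IsOrthProj V P) {X M : Mat n} (hm : M ∈ V)
    (h : ∀ Y ∈ V, finner (X - M) Y = 0) : P X = M := by
  have hd : P X - M ∈ V := sub_mem (hP.1 X) hm
  have e : P X - M = -(X - P X) + (X - M) := by abel
  have h0 : finner (P X - M) (P X - M) = 0 := by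
    nth_rewrite 1 [e]
    rw [finner_add_left, finner_neg_left, hP.2.2 X _ hd, h _ hd]; ring
  exact sub_eq_zero.1 (finner_self_eq_zero h0)

end Proj

end Stmt8

namespace Stmt8

variable {n : ℕ}

/-! ### Masks for the support subspace -/

noncomputable def maskS (S0 X : Mat n) : Mat n := Matrix.of fun i j => if S0 i j = 0 then 0 else X i j
noncomputable def maskZ (S0 X : Mat n) : Mat n := Matrix.of fun i j => if S0 i j = 0 then X i j else 0

lemma maskS_mem (S0 X : Mat n) : maskS S0 X ∈ suppSub S0 := by
  intro i j h; simp [maskS, h]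

lemma finner_maskZ_eq_zero (S0 X Y : Mat n) (hY : Y ∈ suppSub S0) :
    finner (maskZ S0 X) Y = 0 := by
  rw [finner]
  apply Finset.sum_eq_zero; intro i _
  apply Finset.sum_eq_zero; intro j _
  by_cases h : S0 i j = 0
  · rw [hY i j h]; ring
  · simp [maskZ, h]

lemma maskZ_mem (S0 X : Mat n) : maskZ S0 X ∈ orthComp (suppSub S0) :=
  fun Y hY => finner_maskZ_eq_zero S0 X Y hY

lemma maskS_add_maskZ (S0 X : Mat n) : maskS S0 X + maskZ S0 X = X := by
  ext i j
  by_cases h : S0 i j = 0 <;> simp [maskS, maskZ, h]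

lemma PΩ_apply {S0 : Mat n} {P : Mat n →ₗ[ℝ] Mat n} (hP : IsOrthProj (suppSub S0) P)
    (X : Mat n) : P X = maskS S0 X := by
  apply proj_eq_of hP (maskS_mem S0 X)
  intro Y hY
  have e : X - maskS S0 X = maskZ S0 X := by
    ext i j; by_cases h : S0 i j = 0 <;> simp [maskS, maskZ, h]
  rw [e]; exact finner_maskZ_eq_zero S0 X Y hY

lemma PΩperp_apply {S0 : Mat n} {P : Mat n →ₗ[ℝ] Mat n}
    (hP : IsOrthProj (orthComp (suppSub S0)) P) (X : Mat n) : P X = maskZ S0 X := by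
  apply proj_eq_of hP (maskZ_mem S0 X)
  intro Y hY
  have e : X - maskZ S0 X = maskS S0 X := by
    ext i j; by_cases h : S0 i j = 0 <;> simp [maskS, maskZ, h]
  rw [e, finner_comm]
  exact hY _ (maskS_mem S0 X)

lemma fnorm_maskS_le (S0 X : Mat n) : fnorm (maskS S0 X) ≤ fnorm X := by
  apply Real.sqrt_le_sqrt
  apply Finset.sum_le_sum; intro i _
  apply Finset.sum_le_sum; intro j _
  by_cases h : S0 i j = 0 <;> simp [maskS, h, mul_self_nonneg]

lemma fnorm_le_fnorm_maskS_add_maskZ (S0 X : Mat n) :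
    fnorm X ≤ fnorm (maskS S0 X) + fnorm (maskZ S0 X) := by
  calc fnorm X = fnorm (maskS S0 X + maskZ S0 X) := by rw [maskS_add_maskZ]
    _ ≤ _ := fnorm_add_le _ _

/-! ### l1 and linf facts -/

lemma l1Norm_nonneg (X : Mat n) : 0 ≤ l1Norm X :=
  Finset.sum_nonneg fun i _ => Finset.sum_nonneg fun j _ => abs_nonneg _

lemma fnorm_le_l1Norm (X : Mat n) : fnorm X ≤ l1Norm X := by
  rw [fnorm]
  have h : finner X X ≤ (l1Norm X)^2 := by
    have h1 : finner X X = ∑ p : Fin n × Fin n, |X p.1 p.2| * |X p.1 p.2| := by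
      rw [finner_eq_sum_prod]; congr 1; ext p; rw [abs_mul_abs_self]
    have h2 : l1Norm X = ∑ p : Fin n × Fin n, |X p.1 p.2| := by
      rw [l1Norm, ← Finset.sum_product']; rfl
    rw [h1, h2, sq, Finset.sum_mul]
    apply Finset.sum_le_sum; intro p _
    apply mul_le_mul_of_nonneg_left _ (abs_nonneg _)
    exact Finset.single_le_sum (f := fun q : Fin n × Fin n => |X q.1 q.2|)
      (fun q _ => abs_nonneg _) (Finset.mem_univ p)
  calc Real.sqrt (finner X X) ≤ Real.sqrt ((l1Norm X)^2) := Real.sqrt_le_sqrt h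
    _ = l1Norm X := Real.sqrt_sq (l1Norm_nonneg X)

lemma abs_le_linfNorm (F : Mat n) (i j : Fin n) : |F i j| ≤ linfNorm F := by
  have := le_ciSup (f := fun p : Fin n × Fin n => |F p.1 p.2|)
    (Set.Finite.bddAbove (Set.finite_range _)) ((i, j) : Fin n × Fin n)
  exact this

lemma abs_finner_le_linf_mul_l1 (F Y : Mat n) : |finner F Y| ≤ linfNorm F * l1Norm Y := by
  calc |finner F Y| ≤ ∑ i, |∑ j, F i j * Y i j| := Finset.abs_sum_le_sum_abs _ _
    _ ≤ ∑ i, ∑ j, |F i j * Y i j| :=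
        Finset.sum_le_sum fun i _ => Finset.abs_sum_le_sum_abs _ _
    _ ≤ ∑ i, ∑ j, linfNorm F * |Y i j| := by
        apply Finset.sum_le_sum; intro i _
        apply Finset.sum_le_sum; intro j _
        rw [abs_mul]
        exact mul_le_mul_of_nonneg_right (abs_le_linfNorm F i j) (abs_nonneg _)
    _ = linfNorm F * l1Norm Y := by rw [l1Norm, Finset.mul_sum]; congr 1; ext i; rw [Finset.mul_sum]

/-! ### Tangent space membership -/

lemma mem_orthComp_tangent {r : ℕ} (U V : Matrix (Fin n) (Fin r) ℝ) (W : Mat n)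
    (hUW : Uᵀ * W = 0) (hWV : W * V = 0) : W ∈ orthComp (tangentT U V) := by
  rintro A ⟨X, Y, rfl⟩
  rw [finner_add_right, finner_eq_trace, finner_eq_trace]
  have e1 : Wᵀ * (U * Xᵀ) = (Uᵀ * W)ᵀ * Xᵀ := by
    rw [Matrix.transpose_mul, Matrix.transpose_transpose, Matrix.mul_assoc]
  have e2 : Matrix.trace (Wᵀ * (Y * Vᵀ)) = Matrix.trace ((W * V)ᵀ * Y) := by
    rw [← Matrix.mul_assoc, Matrix.trace_mul_comm, Matrix.transpose_mul, ← Matrix.mul_assoc]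
  rw [e1, hUW, e2, hWV]
  simp

lemma orthComp_tangent_left {r : ℕ} (U V : Matrix (Fin n) (Fin r) ℝ) (B : Mat n)
    (hB : B ∈ orthComp (tangentT U V)) : Uᵀ * B = 0 := by
  have h := hB (U * (Uᵀ * B)) ⟨(Uᵀ * B)ᵀ, 0, by
    rw [Matrix.transpose_transpose, Matrix.zero_mul, add_zero]⟩
  apply trace_transpose_mul_self_eq_zero
  have e : (Uᵀ * B)ᵀ * (Uᵀ * B) = Bᵀ * (U * (Uᵀ * B)) := by
    rw [Matrix.transpose_mul, Matrix.transpose_transpose, Matrix.mul_assoc]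
  rw [e, ← finner_eq_trace]; exact h

lemma orthComp_tangent_right {r : ℕ} (U V : Matrix (Fin n) (Fin r) ℝ) (B : Mat n)
    (hB : B ∈ orthComp (tangentT U V)) : B * V = 0 := by
  have h := hB ((B * V) * Vᵀ) ⟨0, B * V, by rw [Matrix.transpose_zero, Matrix.mul_zero, zero_add]⟩
  apply trace_transpose_mul_self_eq_zero
  have e : (B * V)ᵀ * (B * V) = Vᵀ * (Bᵀ * (B * V)) := by
    rw [Matrix.transpose_mul, Matrix.mul_assoc]
  have e2 : ((B * V)ᵀ * (B * V)).trace = (Bᵀ * (B * V * Vᵀ)).trace := by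
    rw [e, Matrix.trace_mul_comm, Matrix.mul_assoc]
  rw [e2, ← finner_eq_trace]; exact h

/-! ### scalar sign inequality -/

lemma sign_ineq (a h : ℝ) :
    |a| - Real.sign a * h + (if a = 0 then |h| else 0) ≤ |a - h| := by
  by_cases ha : a = 0
  · subst ha; simp [Real.sign_zero]
  · simp only [ha, if_false, add_zero]
    rcases lt_or_gt_of_ne ha with hlt | hgt
    · rw [Real.sign_of_neg hlt, abs_of_neg hlt]
      have := neg_le_abs (a - h)
      linarith
    · rw [Real.sign_of_pos hgt, abs_of_pos hgt]
      have := le_abs_self (a - h)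
      linarith

end Stmt8

namespace Stmt8

variable {n : ℕ}

/-! ### dot product helpers -/

lemma dot_self_nonneg (v : Fin n → ℝ) : 0 ≤ v ⬝ᵥ v :=
  Finset.sum_nonneg fun i _ => mul_self_nonneg _

lemma dot_CS (a b : Fin n → ℝ) : a ⬝ᵥ b ≤ Real.sqrt (a ⬝ᵥ a) * Real.sqrt (b ⬝ᵥ b) := by
  have cs := Finset.sum_mul_sq_le_sq_mul_sq Finset.univ a b
  have h1 : ∑ i, a i ^ 2 = a ⬝ᵥ a := by rw [dotProduct]; congr 1; ext i; ring
  have h2 : ∑ i, b i ^ 2 = b ⬝ᵥ b := by rw [dotProduct]; congr 1; ext i; ring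
  rw [h1, h2] at cs
  calc a ⬝ᵥ b ≤ |a ⬝ᵥ b| := le_abs_self _
    _ = Real.sqrt ((a ⬝ᵥ b)^2) := (Real.sqrt_sq_eq_abs _).symm
    _ ≤ Real.sqrt ((a ⬝ᵥ a) * (b ⬝ᵥ b)) := Real.sqrt_le_sqrt cs
    _ = _ := Real.sqrt_mul (dot_self_nonneg a) _

lemma dot_mulVec_mulVec {m k : ℕ} (A : Matrix (Fin n) (Fin m) ℝ) (B : Matrix (Fin n) (Fin k) ℝ)
    (a : Fin m → ℝ) (b : Fin k → ℝ) :
    (A *ᵥ a) ⬝ᵥ (B *ᵥ b) = ((Aᵀ * B) *ᵥ b) ⬝ᵥ a := by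
  rw [dotProduct_comm, Matrix.dotProduct_mulVec, ← Matrix.mulVec_transpose,
    Matrix.mulVec_mulVec]

lemma dot_sum_right {ι : Type*} (v : Fin n → ℝ) (s : Finset ι) (f : ι → Fin n → ℝ) :
    v ⬝ᵥ (∑ i ∈ s, f i) = ∑ i ∈ s, v ⬝ᵥ f i := by
  classical
  induction s using Finset.induction with
  | empty => simp
  | insert a s' h ih =>
                   rw [Finset.sum_insert h, Finset.sum_insert h, dotProduct_add, ih]

lemma dot_sum_left {ι : Type*} (v : Fin n → ℝ) (s : Finset ι) (f : ι → Fin n → ℝ) :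
    (∑ i ∈ s, f i) ⬝ᵥ v = ∑ i ∈ s, f i ⬝ᵥ v := by
  rw [dotProduct_comm, dot_sum_right]
  exact Finset.sum_congr rfl fun i _ => dotProduct_comm _ _

lemma sum_mulVec {ι : Type*} (s : Finset ι) (A : ι → Mat n) (v : Fin n → ℝ) :
    (∑ i ∈ s, A i) *ᵥ v = ∑ i ∈ s, (A i *ᵥ v) := by
  classical
  induction s using Finset.induction with
  | empty => simp [Matrix.zero_mulVec]
  | insert a s' h ih =>
                   rw [Finset.sum_insert h, Finset.sum_insert h, Matrix.add_mulVec, ih]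

lemma vecMulVec_mulVec (a b v : Fin n → ℝ) :
    Matrix.vecMulVec a b *ᵥ v = (b ⬝ᵥ v) • a := by
  ext k
  simp only [Matrix.mulVec, dotProduct, Matrix.vecMulVec_apply, Pi.smul_apply,
    smul_eq_mul, Finset.sum_mul]
  exact Finset.sum_congr rfl fun x _ => by ring

/-! ### spectral norm bridge -/

lemma norm_withLp_symm (v : Fin n → ℝ) :
    ‖((WithLp.equiv 2 (Fin n → ℝ)).symm v : EuclideanSpace ℝ (Fin n))‖ = Real.sqrt (v ⬝ᵥ v) := by
  rw [EuclideanSpace.norm_eq]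
  congr 1
  rw [dotProduct]
  apply Finset.sum_congr rfl
  intro i _
  show ‖v i‖ ^ 2 = v i * v i
  rw [Real.norm_eq_abs, sq_abs, sq]

lemma specNorm_nonneg (Z : Mat n) : 0 ≤ specNorm Z := norm_nonneg _

lemma specNorm_neg (Z : Mat n) : specNorm (-Z) = specNorm Z := by
  unfold specNorm; rw [map_neg, norm_neg]

lemma sqrt_dot_mulVec_le (Z : Mat n) (v : Fin n → ℝ) :
    Real.sqrt ((Z *ᵥ v) ⬝ᵥ (Z *ᵥ v)) ≤ specNorm Z * Real.sqrt (v ⬝ᵥ v) := by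
  have h := (Matrix.toEuclideanCLM (𝕜 := ℝ) (n := Fin n) Z).le_opNorm
    ((WithLp.equiv 2 (Fin n → ℝ)).symm v)
  rw [(show ∀ v, Matrix.toEuclideanCLM (𝕜 := ℝ) Z ((WithLp.equiv 2 (Fin n → ℝ)).symm v) = (WithLp.equiv 2 (Fin n → ℝ)).symm (Matrix.toLin' Z v) from fun _ => rfl), Matrix.toLin'_apply, norm_withLp_symm,
    norm_withLp_symm] at h
  exact h

lemma specNorm_le_of {Z : Mat n} {c : ℝ} (hc : 0 ≤ c)
    (h : ∀ v : Fin n → ℝ, (Z *ᵥ v) ⬝ᵥ (Z *ᵥ v) ≤ c^2 * (v ⬝ᵥ v)) : specNorm Z ≤ c := by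
  apply ContinuousLinearMap.opNorm_le_bound _ hc
  intro x
  have hx : x = (WithLp.equiv 2 (Fin n → ℝ)).symm (WithLp.equiv 2 (Fin n → ℝ) x) :=
    ((WithLp.equiv 2 (Fin n → ℝ)).symm_apply_apply x).symm
  set v := WithLp.equiv 2 (Fin n → ℝ) x with hv
  rw [hx, (show ∀ v, Matrix.toEuclideanCLM (𝕜 := ℝ) Z ((WithLp.equiv 2 (Fin n → ℝ)).symm v) = (WithLp.equiv 2 (Fin n → ℝ)).symm (Matrix.toLin' Z v) from fun _ => rfl), Matrix.toLin'_apply, norm_withLp_symm,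
    norm_withLp_symm]
  calc Real.sqrt ((Z *ᵥ v) ⬝ᵥ (Z *ᵥ v)) ≤ Real.sqrt (c^2 * (v ⬝ᵥ v)) := Real.sqrt_le_sqrt (h v)
    _ = c * Real.sqrt (v ⬝ᵥ v) := by
        rw [Real.sqrt_mul (sq_nonneg c), Real.sqrt_sq hc]

/-! ### Bessel -/

lemma bessel {ι : Type*} [Fintype ι] (w : ι → Fin n → ℝ) (h1 : ∀ i, w i ⬝ᵥ w i ≤ 1)
    (h2 : ∀ i j, i ≠ j → w i ⬝ᵥ w j = 0) (v : Fin n → ℝ) :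
    ∑ i, (w i ⬝ᵥ v)^2 ≤ v ⬝ᵥ v := by
  classical
  set t : Fin n → ℝ := ∑ i, (w i ⬝ᵥ v) • w i with ht
  have hvt : v ⬝ᵥ t = ∑ i, (w i ⬝ᵥ v)^2 := by
    rw [ht, dot_sum_right]
    apply Finset.sum_congr rfl; intro i _
    rw [dotProduct_smul, smul_eq_mul, dotProduct_comm]; ring
  have htt : t ⬝ᵥ t = ∑ i, (w i ⬝ᵥ v)^2 * (w i ⬝ᵥ w i) := by
    rw [ht, dot_sum_left]
    apply Finset.sum_congr rfl; intro i _
    rw [smul_dotProduct, dot_sum_right, smul_eq_mul, Finset.mul_sum]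
    rw [Finset.sum_eq_single i]
    · rw [dotProduct_smul, smul_eq_mul]; ring
    · intro j _ hji
      rw [dotProduct_smul, h2 i j (Ne.symm hji), smul_zero, mul_zero]
    · intro hi; exact absurd (Finset.mem_univ i) hi
  have htt_le : t ⬝ᵥ t ≤ ∑ i, (w i ⬝ᵥ v)^2 := by
    rw [htt]
    apply Finset.sum_le_sum; intro i _
    calc (w i ⬝ᵥ v)^2 * (w i ⬝ᵥ w i) ≤ (w i ⬝ᵥ v)^2 * 1 :=
          mul_le_mul_of_nonneg_left (h1 i) (sq_nonneg _)
      _ = _ := mul_one _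
  have hpos : 0 ≤ (v - t) ⬝ᵥ (v - t) := dot_self_nonneg _
  have hexp : (v - t) ⬝ᵥ (v - t) = v ⬝ᵥ v - 2 * (v ⬝ᵥ t) + t ⬝ᵥ t := by
    rw [sub_dotProduct, dotProduct_sub, dotProduct_sub,
      dotProduct_comm t v]
    ring
  rw [hexp, hvt] at hpos
  linarith

end Stmt8

namespace Stmt8

variable {n : ℕ}

lemma hermTM (X : Mat n) : (Xᵀ * X).IsHermitian := by
  simpa [Matrix.conjTranspose_eq_transpose_of_trivial] using
    Matrix.isHermitian_conjTranspose_mul_self X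

noncomputable def evec (X : Mat n) (i : Fin n) : Fin n → ℝ :=
  (hermTM X).eigenvectorBasis i

noncomputable def eval (X : Mat n) (i : Fin n) : ℝ :=
  (hermTM X).eigenvalues i

lemma evec_mulVec (X : Mat n) (i : Fin n) :
    (Xᵀ * X) *ᵥ evec X i = eval X i • evec X i :=
  (hermTM X).mulVec_eigenvectorBasis i

lemma evec_dot (X : Mat n) (i j : Fin n) :
    evec X i ⬝ᵥ evec X j = if i = j then 1 else 0 := by
  have h := orthonormal_iff_ite.mp
    ((hermTM X).eigenvectorBasis.orthonormal) i j
  rw [PiLp.inner_apply] at h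
  simp only [RCLike.inner_apply, starRingEnd_apply, star_trivial] at h
  rw [dotProduct]
  convert h using 2
  exact mul_comm _ _

lemma nucNorm_eq (X : Mat n) : nucNorm X = ∑ i, Real.sqrt (eval X i) := rfl

lemma dot_X_evec (X : Mat n) (i j : Fin n) :
    (X *ᵥ evec X i) ⬝ᵥ (X *ᵥ evec X j) = if i = j then eval X i else 0 := by
  rw [dot_mulVec_mulVec, evec_mulVec, smul_dotProduct, evec_dot X j i, smul_eq_mul]
  by_cases h : i = j
  · subst h; simp
  · have hji : j ≠ i := fun hc => h hc.symm
    simp [h, hji]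

lemma eval_nonneg (X : Mat n) (i : Fin n) : 0 ≤ eval X i := by
  have h := dot_X_evec X i i
  rw [if_pos rfl] at h
  rw [← h]; exact dot_self_nonneg _

lemma evec_rows_orthonormal (X : Mat n) (j l : Fin n) :
    ∑ i, evec X i j * evec X i l = if j = l then 1 else 0 := by
  classical
  set Qm : Mat n := Matrix.of (fun a b => evec X b a) with hQ
  have h1 : Qmᵀ * Qm = 1 := by
    ext i i'
    rw [Matrix.mul_apply, Matrix.one_apply]
    have : ∑ a, Qmᵀ i a * Qm a i' = evec X i ⬝ᵥ evec X i' := by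
      rw [dotProduct]
      apply Finset.sum_congr rfl; intro a _
      simp [hQ, Matrix.transpose_apply]
    rw [this, evec_dot]
  have h2 : Qm * Qmᵀ = 1 := mul_eq_one_comm.mp h1
  have h4 : (Qm * Qmᵀ) j l = ∑ i, evec X i j * evec X i l := by
    rw [Matrix.mul_apply]
    apply Finset.sum_congr rfl; intro a _
    simp [hQ, Matrix.transpose_apply]
  rw [← h4, h2, Matrix.one_apply]

lemma finner_eq_sum_dot (Z X : Mat n) :
    finner Z X = ∑ i, (Z *ᵥ evec X i) ⬝ᵥ (X *ᵥ evec X i) := by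
  classical
  have step1 : ∑ i, (Z *ᵥ evec X i) ⬝ᵥ (X *ᵥ evec X i)
      = ∑ i, ∑ k, ∑ j, ∑ l, Z k j * X k l * (evec X i j * evec X i l) := by
    apply Finset.sum_congr rfl; intro i _
    rw [dotProduct]
    rw [show ∀ (f g : Fin n → ℝ), ∑ k, f k * g k = ∑ k, f k * g k from fun _ _ => rfl]
    apply Finset.sum_congr rfl; intro k _
    show (∑ j, Z k j * evec X i j) * (∑ l, X k l * evec X i l) = _
    rw [Finset.sum_mul_sum]
    apply Finset.sum_congr rfl; intro j _
    apply Finset.sum_congr rfl; intro l _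
    ring
  rw [step1, Finset.sum_comm]
  have step2 : ∀ k, ∑ i, ∑ j, ∑ l, Z k j * X k l * (evec X i j * evec X i l)
      = ∑ j, Z k j * X k j := by
    intro k
    rw [Finset.sum_comm]
    apply Finset.sum_congr rfl; intro j _
    rw [Finset.sum_comm]
    have : ∀ l, ∑ i, Z k j * X k l * (evec X i j * evec X i l)
        = Z k j * X k l * (if j = l then 1 else 0) := by
      intro l
      rw [← Finset.mul_sum, evec_rows_orthonormal]
    rw [Finset.sum_congr rfl (fun l _ => this l)]
    simp
  rw [Finset.sum_congr rfl (fun k _ => step2 k)]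
  rfl

lemma nucNorm_nonneg (X : Mat n) : 0 ≤ nucNorm X :=
  Finset.sum_nonneg fun i _ => Real.sqrt_nonneg _

lemma finner_le_specNorm_mul_nucNorm (Z X : Mat n) :
    finner Z X ≤ specNorm Z * nucNorm X := by
  rw [finner_eq_sum_dot Z X, nucNorm_eq, Finset.mul_sum]
  apply Finset.sum_le_sum; intro i _
  have h1 : (Z *ᵥ evec X i) ⬝ᵥ (X *ᵥ evec X i)
      ≤ Real.sqrt ((Z *ᵥ evec X i) ⬝ᵥ (Z *ᵥ evec X i)) *
        Real.sqrt ((X *ᵥ evec X i) ⬝ᵥ (X *ᵥ evec X i)) := dot_CS _ _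
  have h2 : Real.sqrt ((X *ᵥ evec X i) ⬝ᵥ (X *ᵥ evec X i)) = Real.sqrt (eval X i) := by
    rw [dot_X_evec, if_pos rfl]
  have h3 : Real.sqrt ((Z *ᵥ evec X i) ⬝ᵥ (Z *ᵥ evec X i)) ≤ specNorm Z := by
    have := sqrt_dot_mulVec_le Z (evec X i)
    rw [evec_dot, if_pos rfl, Real.sqrt_one, mul_one] at this
    exact this
  calc (Z *ᵥ evec X i) ⬝ᵥ (X *ᵥ evec X i)
      ≤ Real.sqrt ((Z *ᵥ evec X i) ⬝ᵥ (Z *ᵥ evec X i)) * Real.sqrt (eval X i) := by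
        rw [← h2]; exact h1
    _ ≤ specNorm Z * Real.sqrt (eval X i) :=
        mul_le_mul_of_nonneg_right h3 (Real.sqrt_nonneg _)

lemma abs_finner_le_specNorm_mul_nucNorm (Z X : Mat n) :
    |finner Z X| ≤ specNorm Z * nucNorm X := by
  rw [abs_le]
  constructor
  · have := finner_le_specNorm_mul_nucNorm (-Z) X
    rw [finner_neg_left, specNorm_neg] at this
    linarith
  · exact finner_le_specNorm_mul_nucNorm Z X

lemma sum_sq_le_sq_sum {ι : Type*} [Fintype ι] (f : ι → ℝ) (hf : ∀ i, 0 ≤ f i) :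
    ∑ i, (f i)^2 ≤ (∑ i, f i)^2 := by
  rw [sq (∑ i, f i), Finset.sum_mul]
  apply Finset.sum_le_sum; intro i _
  rw [sq]
  exact mul_le_mul_of_nonneg_left
    (Finset.single_le_sum (fun j _ => hf j) (Finset.mem_univ i)) (hf i)

lemma fnorm_le_nucNorm (X : Mat n) : fnorm X ≤ nucNorm X := by
  have h1 : finner X X = ∑ i, eval X i := by
    rw [finner_eq_sum_dot X X]
    apply Finset.sum_congr rfl; intro i _
    rw [dot_X_evec, if_pos rfl]
  have h2 : ∑ i, eval X i ≤ (∑ i, Real.sqrt (eval X i))^2 := by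
    have := sum_sq_le_sq_sum (fun i => Real.sqrt (eval X i)) (fun i => Real.sqrt_nonneg _)
    calc ∑ i, eval X i = ∑ i, (Real.sqrt (eval X i))^2 := by
          apply Finset.sum_congr rfl; intro i _
          rw [Real.sq_sqrt (eval_nonneg X i)]
      _ ≤ _ := this
  rw [fnorm, nucNorm_eq]
  calc Real.sqrt (finner X X) ≤ Real.sqrt ((∑ i, Real.sqrt (eval X i))^2) := by
        apply Real.sqrt_le_sqrt; rw [h1]; exact h2
    _ = ∑ i, Real.sqrt (eval X i) :=
        Real.sqrt_sq (Finset.sum_nonneg fun i _ => Real.sqrt_nonneg _)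

end Stmt8

namespace Stmt8

variable {n : ℕ}

lemma dual_exists {r : ℕ} (X : Mat n) (U V : Matrix (Fin n) (Fin r) ℝ)
    (hU : Uᵀ * U = 1) (hV : Vᵀ * V = 1) (hUX : Uᵀ * X = 0) (hXV : X * V = 0) :
    ∃ W0 : Mat n, finner W0 X = nucNorm X ∧ specNorm (U * Vᵀ + W0) ≤ 1 ∧
      W0 ∈ orthComp (tangentT U V) := by
  classical
  set c : Fin n → ℝ := fun i => if eval X i = 0 then 0 else (Real.sqrt (eval X i))⁻¹ with hc
  set W0 : Mat n := ∑ i, c i • Matrix.vecMulVec (X *ᵥ evec X i) (evec X i) with hW0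
  have hsq : ∀ i, eval X i ≠ 0 → 0 < Real.sqrt (eval X i) := fun i hi =>
    Real.sqrt_pos.mpr (lt_of_le_of_ne (eval_nonneg X i) (Ne.symm hi))
  have hcross : ∀ i j, eval X i ≠ 0 → evec X i ⬝ᵥ (fun k => V k j) = 0 := by
    intro i j hi
    have hXv : X *ᵥ (fun k => V k j) = 0 := by
      ext k
      have h0 : (X * V) k j = 0 := by rw [hXV]; rfl
      have h1 : (X *ᵥ fun k => V k j) k = (X * V) k j := by
        rw [Matrix.mul_apply]; rfl
      rw [h1, h0]; rfl
    have h1 : (X *ᵥ (fun k => V k j)) ⬝ᵥ (X *ᵥ evec X i)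
        = ((Xᵀ * X) *ᵥ evec X i) ⬝ᵥ (fun k => V k j) := dot_mulVec_mulVec X X _ _
    rw [hXv, zero_dotProduct, evec_mulVec, smul_dotProduct] at h1
    have h2 := h1.symm
    rw [smul_eq_mul] at h2
    exact (mul_eq_zero.mp h2).resolve_left hi
  -- (a)
  have ha : finner W0 X = nucNorm X := by
    rw [hW0, finner_sum_left, nucNorm_eq]
    apply Finset.sum_congr rfl; intro i _
    rw [finner_smul_left, finner_vecMulVec_left, dot_X_evec, if_pos rfl]
    by_cases hi : eval X i = 0
    · simp [hc, hi]
    · simp only [hc, hi, if_false]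
      set sq := Real.sqrt (eval X i) with hsqdef
      have hs0 : sq ≠ 0 := ne_of_gt (hsq i hi)
      have he : eval X i = sq * sq := (Real.mul_self_sqrt (eval_nonneg X i)).symm
      rw [he, ← mul_assoc, inv_mul_cancel₀ hs0, one_mul]
  -- (c)
  have hUW0 : Uᵀ * W0 = 0 := by
    rw [hW0, Matrix.mul_sum]
    apply Finset.sum_eq_zero; intro i _
    rw [Matrix.mul_smul]
    have e : Uᵀ * Matrix.vecMulVec (X *ᵥ evec X i) (evec X i)
        = Matrix.vecMulVec (Uᵀ *ᵥ (X *ᵥ evec X i)) (evec X i) := by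
      ext k j
      rw [Matrix.mul_apply]
      simp only [Matrix.vecMulVec_apply]
      rw [show (Uᵀ *ᵥ (X *ᵥ evec X i)) k = ∑ l, Uᵀ k l * (X *ᵥ evec X i) l from rfl]
      rw [Finset.sum_mul]
      exact Finset.sum_congr rfl fun l _ => by ring
    rw [e, Matrix.mulVec_mulVec, hUX, Matrix.zero_mulVec]
    ext a b
    simp [Matrix.vecMulVec_apply, Matrix.smul_apply]
  have hW0V : W0 * V = 0 := by
    rw [hW0, Matrix.sum_mul]
    apply Finset.sum_eq_zero; intro i _
    rw [Matrix.smul_mul]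
    by_cases hi : eval X i = 0
    · simp [hc, hi]
    · have e : Matrix.vecMulVec (X *ᵥ evec X i) (evec X i) * V = 0 := by
        ext k j
        rw [Matrix.mul_apply]
        simp only [Matrix.vecMulVec_apply, Matrix.zero_apply]
        have h3 : ∑ l, (X *ᵥ evec X i) k * evec X i l * V l j
            = (X *ᵥ evec X i) k * (evec X i ⬝ᵥ fun k => V k j) := by
          rw [dotProduct, Finset.mul_sum]
          exact Finset.sum_congr rfl fun l _ => by ring
        rw [h3, hcross i j hi, mul_zero]
      rw [e, smul_zero]
  have hmem : W0 ∈ orthComp (tangentT U V) := mem_orthComp_tangent U V W0 hUW0 hW0V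
  -- (b)
  have hb : specNorm (U * Vᵀ + W0) ≤ 1 := by
    apply specNorm_le_of (by norm_num : (0:ℝ) ≤ 1)
    intro v
    rw [one_pow, one_mul, Matrix.add_mulVec]
    set w : Fin n → ℝ := (U * Vᵀ) *ᵥ v with hw
    set s : Fin n → ℝ := W0 *ᵥ v with hs
    have hsform : s = ∑ i, (c i * (evec X i ⬝ᵥ v)) • (X *ᵥ evec X i) := by
      rw [hs, hW0, sum_mulVec]
      apply Finset.sum_congr rfl; intro i _
      rw [Matrix.smul_mulVec, vecMulVec_mulVec, smul_smul]
    have hww : w ⬝ᵥ w = ∑ j, ((fun k => V k j) ⬝ᵥ v)^2 := by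
      rw [hw, ← Matrix.mulVec_mulVec, dot_mulVec_mulVec U U _ _, hU, Matrix.one_mulVec]
      rw [dotProduct]
      apply Finset.sum_congr rfl; intro j _
      have h4 : (Vᵀ *ᵥ v) j = (fun k => V k j) ⬝ᵥ v := rfl
      rw [h4]; ring
    have hws : w ⬝ᵥ s = 0 := by
      rw [hsform, dot_sum_right]
      apply Finset.sum_eq_zero; intro i _
      rw [dotProduct_smul]
      have h5 : w ⬝ᵥ (X *ᵥ evec X i) = 0 := by
        rw [hw, ← Matrix.mulVec_mulVec, dot_mulVec_mulVec U X _ _, hUX, Matrix.zero_mulVec,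
          zero_dotProduct]
      rw [h5, smul_zero]
    have hss : s ⬝ᵥ s = ∑ i, (if eval X i = 0 then 0 else (evec X i ⬝ᵥ v)^2) := by
      rw [hsform, dot_sum_left]
      apply Finset.sum_congr rfl; intro i _
      rw [smul_dotProduct, dot_sum_right, smul_eq_mul, Finset.mul_sum]
      rw [Finset.sum_eq_single i]
      · rw [dotProduct_smul, smul_eq_mul, dot_X_evec, if_pos rfl]
        by_cases hi : eval X i = 0
        · simp [hc, hi]
        · simp only [hc, hi, if_false]
          set sq := Real.sqrt (eval X i) with hsqdef
          have hs0 : sq ≠ 0 := ne_of_gt (hsq i hi)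
          have he : eval X i = sq * sq := (Real.mul_self_sqrt (eval_nonneg X i)).symm
          rw [he]
          field_simp
      · intro j _ hji
        rw [dotProduct_smul, dot_X_evec]
        have hij : ¬ (i = j) := fun hc' => hji hc'.symm
        rw [if_neg hij, smul_zero, mul_zero]
      · intro hi; exact absurd (Finset.mem_univ i) hi
    set fam : (Fin r ⊕ Fin n) → Fin n → ℝ :=
      Sum.elim (fun j => fun k => V k j) (fun i => if eval X i = 0 then 0 else evec X i)
      with hfam
    have hb1 : ∀ p, fam p ⬝ᵥ fam p ≤ 1 := by
      rintro (j | i)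
      · have h6 : (fun k => V k j) ⬝ᵥ (fun k => V k j) = (Vᵀ * V) j j := by
          rw [Matrix.mul_apply]; rfl
        simp only [hfam, Sum.elim_inl]
        rw [h6, hV, Matrix.one_apply_eq]
      · simp only [hfam, Sum.elim_inr]
        by_cases hi : eval X i = 0
        · simp [hi]
        · rw [if_neg hi, evec_dot, if_pos rfl]
    have hb2 : ∀ p q, p ≠ q → fam p ⬝ᵥ fam q = 0 := by
      rintro (j | i) (j' | i') hpq
      · have h6 : (fun k => V k j) ⬝ᵥ (fun k => V k j') = (Vᵀ * V) j j' := by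
          rw [Matrix.mul_apply]; rfl
        simp only [hfam, Sum.elim_inl]
        rw [h6, hV, Matrix.one_apply_ne (fun h => hpq (by rw [h]))]
      · simp only [hfam, Sum.elim_inl, Sum.elim_inr]
        by_cases hi : eval X i' = 0
        · simp [hi]
        · rw [if_neg hi, dotProduct_comm, hcross i' j hi]
      · simp only [hfam, Sum.elim_inl, Sum.elim_inr]
        by_cases hi : eval X i = 0
        · simp [hi]
        · rw [if_neg hi, hcross i j' hi]
      · simp only [hfam, Sum.elim_inr]
        by_cases hi : eval X i = 0
        · simp [hi]
        · by_cases hi' : eval X i' = 0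
          · simp [hi']
          · rw [if_neg hi, if_neg hi', evec_dot, if_neg (fun h => hpq (by rw [h]))]
    have hbessel := bessel fam hb1 hb2 v
    rw [Fintype.sum_sum_type] at hbessel
    have hident : ∑ i, (fam (Sum.inr i) ⬝ᵥ v)^2
        = ∑ i, (if eval X i = 0 then 0 else (evec X i ⬝ᵥ v)^2) := by
      apply Finset.sum_congr rfl; intro i _
      simp only [hfam, Sum.elim_inr]
      by_cases hi : eval X i = 0
      · simp [hi]
      · rw [if_neg hi, if_neg hi]
    have hident2 : ∑ j, (fam (Sum.inl j) ⬝ᵥ v)^2 = ∑ j, ((fun k => V k j) ⬝ᵥ v)^2 := by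
      apply Finset.sum_congr rfl; intro j _
      simp only [hfam, Sum.elim_inl]
    have hexp : (w + s) ⬝ᵥ (w + s) = w ⬝ᵥ w + 2 * (w ⬝ᵥ s) + s ⬝ᵥ s := by
      rw [add_dotProduct, dotProduct_add, dotProduct_add,
        dotProduct_comm s w]
      ring
    rw [hexp, hww, hws, hss]
    rw [hident2, hident] at hbessel
    linarith
  exact ⟨W0, ha, hb, hmem⟩

end Stmt8

namespace Stmt8

variable {n : ℕ}

lemma opNorm_apply_le {A : Mat n →ₗ[ℝ] Mat n} (hcontr : ∀ X, fnorm (A X) ≤ fnorm X)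
    (hop : opNorm A ≤ 1/2) (X : Mat n) : fnorm (A X) ≤ 1/2 * fnorm X := by
  by_cases h0 : fnorm X = 0
  · have hX : X = 0 := fnorm_eq_zero h0
    rw [hX, map_zero, fnorm_zero]
    norm_num
  · have ht : 0 < fnorm X := lt_of_le_of_ne (fnorm_nonneg X) (Ne.symm h0)
    set t := fnorm X with htdef
    set Y := t⁻¹ • X with hY
    have hYnorm : fnorm Y = 1 := by
      rw [hY, fnorm_smul, abs_of_pos (inv_pos.mpr ht), ← htdef, inv_mul_cancel₀ (ne_of_gt ht)]
    have hbdd : BddAbove {c : ℝ | ∃ Z : Mat n, fnorm Z = 1 ∧ c = fnorm (A Z)} := by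
      refine ⟨1, ?_⟩
      rintro c ⟨Z, hZ1, rfl⟩
      calc fnorm (A Z) ≤ fnorm Z := hcontr Z
        _ = 1 := hZ1
    have h1 : fnorm (A Y) ≤ opNorm A := le_csSup hbdd ⟨Y, hYnorm, rfl⟩
    have hXY : X = t • Y := by
      rw [hY, smul_smul, mul_inv_cancel₀ (ne_of_gt ht), one_smul]
    calc fnorm (A X) = fnorm (A (t • Y)) := by rw [← hXY]
      _ = fnorm (t • A Y) := by rw [map_smul]
      _ = t * fnorm (A Y) := by rw [fnorm_smul, abs_of_pos ht]
      _ ≤ t * (1/2) := mul_le_mul_of_nonneg_left (le_trans h1 hop) (le_of_lt ht)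
      _ = 1/2 * fnorm X := by rw [htdef]; ring

lemma UdV_decomp {r : ℕ} (U V : Matrix (Fin n) (Fin r) ℝ) (d : Fin r → ℝ) :
    U * Matrix.diagonal d * Vᵀ
      = ∑ i, d i • Matrix.vecMulVec (fun k => U k i) (fun k => V k i) := by
  ext a b
  rw [Matrix.mul_apply]
  rw [Matrix.sum_apply]
  have e1 : ∀ i, (U * Matrix.diagonal d) a i * Vᵀ i b = d i * (U a i * V b i) := by
    intro i
    rw [Matrix.mul_diagonal, Matrix.transpose_apply]; ring
  rw [Finset.sum_congr rfl fun i _ => e1 i]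
  apply Finset.sum_congr rfl; intro i _
  have h2 : (d i • Matrix.vecMulVec (fun k => U k i) (fun k => V k i)) a b
      = d i * (U a i * V b i) := by
    rw [Matrix.smul_apply, Matrix.vecMulVec_apply, smul_eq_mul]
  exact h2.symm

lemma nucNorm_UdV_le {r : ℕ} (U V : Matrix (Fin n) (Fin r) ℝ) (d : Fin r → ℝ)
    (hU : Uᵀ * U = 1) (hV : Vᵀ * V = 1) (hd : ∀ i, 0 ≤ d i) :
    nucNorm (U * Matrix.diagonal d * Vᵀ) ≤ ∑ i, d i := by
  set X := U * Matrix.diagonal d * Vᵀ with hX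
  obtain ⟨Z0, hZ1, hZ2, _⟩ := dual_exists X (0 : Matrix (Fin n) (Fin 0) ℝ) 0
    (by ext i j; exact i.elim0) (by ext i j; exact i.elim0)
    (by ext i j; exact i.elim0) (by ext i j; exact j.elim0)
  have hzero : (0 : Matrix (Fin n) (Fin 0) ℝ) * (0 : Matrix (Fin n) (Fin 0) ℝ)ᵀ = 0 := by
    ext i j; rw [Matrix.mul_apply]; simp
  rw [hzero, zero_add] at hZ2
  rw [← hZ1, finner_comm]
  rw [hX, UdV_decomp]
  rw [finner_sum_left]
  have hbound : ∀ i, finner (d i • Matrix.vecMulVec (fun k => U k i) (fun k => V k i)) Z0 ≤ d i := by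
    intro i
    rw [finner_smul_left, finner_vecMulVec_left]
    have hu : (fun k => U k i) ⬝ᵥ (fun k => U k i) = 1 := by
      have : (fun k => U k i) ⬝ᵥ (fun k => U k i) = (Uᵀ * U) i i := by
        rw [Matrix.mul_apply]; rfl
      rw [this, hU, Matrix.one_apply_eq]
    have hv : (fun k => V k i) ⬝ᵥ (fun k => V k i) = 1 := by
      have : (fun k => V k i) ⬝ᵥ (fun k => V k i) = (Vᵀ * V) i i := by
        rw [Matrix.mul_apply]; rfl
      rw [this, hV, Matrix.one_apply_eq]
    have h1 : (fun k => U k i) ⬝ᵥ (Z0 *ᵥ (fun k => V k i)) ≤ 1 := by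
      calc (fun k => U k i) ⬝ᵥ (Z0 *ᵥ (fun k => V k i))
          ≤ Real.sqrt ((fun k => U k i) ⬝ᵥ (fun k => U k i)) *
            Real.sqrt ((Z0 *ᵥ (fun k => V k i)) ⬝ᵥ (Z0 *ᵥ (fun k => V k i))) := dot_CS _ _
        _ = Real.sqrt ((Z0 *ᵥ (fun k => V k i)) ⬝ᵥ (Z0 *ᵥ (fun k => V k i))) := by
            rw [hu, Real.sqrt_one, one_mul]
        _ ≤ specNorm Z0 * Real.sqrt ((fun k => V k i) ⬝ᵥ (fun k => V k i)) :=
            sqrt_dot_mulVec_le Z0 _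
        _ = specNorm Z0 := by rw [hv, Real.sqrt_one, mul_one]
        _ ≤ 1 := hZ2
    calc d i * ((fun k => U k i) ⬝ᵥ (Z0 *ᵥ (fun k => V k i))) ≤ d i * 1 :=
          mul_le_mul_of_nonneg_left h1 (hd i)
      _ = d i := mul_one _
  exact Finset.sum_le_sum fun i _ => hbound i

lemma l1_lower (S0 HS : Mat n) :
    l1Norm S0 - finner (sgnMat S0) HS + l1Norm (maskZ S0 HS) ≤ l1Norm (S0 - HS) := by
  have key : ∀ i j, |S0 i j| - Real.sign (S0 i j) * HS i j +
      (if S0 i j = 0 then |HS i j| else 0) ≤ |S0 i j - HS i j| := fun i j => sign_ineq _ _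
  have e1 : l1Norm (maskZ S0 HS) = ∑ i, ∑ j, (if S0 i j = 0 then |HS i j| else 0) := by
    rw [l1Norm]
    apply Finset.sum_congr rfl; intro i _
    apply Finset.sum_congr rfl; intro j _
    by_cases h : S0 i j = 0 <;> simp [maskZ, h]
  have e2 : finner (sgnMat S0) HS = ∑ i, ∑ j, Real.sign (S0 i j) * HS i j := rfl
  have main : ∑ i, ∑ j, (|S0 i j| - Real.sign (S0 i j) * HS i j +
      (if S0 i j = 0 then |HS i j| else 0)) ≤ ∑ i, ∑ j, |S0 i j - HS i j| :=
    Finset.sum_le_sum fun i _ => Finset.sum_le_sum fun j _ => key i j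
  have expand : ∑ i, ∑ j, (|S0 i j| - Real.sign (S0 i j) * HS i j +
      (if S0 i j = 0 then |HS i j| else 0))
      = (∑ i, ∑ j, |S0 i j|) - (∑ i, ∑ j, Real.sign (S0 i j) * HS i j) +
        (∑ i, ∑ j, (if S0 i j = 0 then |HS i j| else 0)) := by
    simp only [Finset.sum_add_distrib, Finset.sum_sub_distrib]
  rw [expand] at main
  have erhs : ∑ i, ∑ j, |S0 i j - HS i j| = l1Norm (S0 - HS) := by
    rw [l1Norm]
    simp only [Matrix.sub_apply]
  rw [erhs] at main
  rw [e1, e2, l1Norm]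
  exact main

end Stmt8

open Stmt8 in
/-- The key subgradient inequality: for any feasible perturbation
`(H_L, H_S)` (i.e. `P_Q H_L = P_Q H_S`),
`f(L₀ + H_L, S₀ − H_S) ≥ f(L₀, S₀) + (1 − β − 2αλ)‖P_{T^⊥} H_L‖₊ + (1 − β − α)λ‖P_{Ω^⊥} H_S‖₁`,
where `f(L, S) = ‖L‖₊ + λ‖S‖₁ + ‖L‖_F²/(2τ) + ‖S‖_F²/(2τ)`. -/
theorem statement8 {n r : ℕ} (hn : 1 ≤ n)
    (L0 S0 M : Mat n) (U V : Matrix (Fin n) (Fin r) ℝ) (d : Fin r → ℝ)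
    (hU : Uᵀ * U = 1) (hV : Vᵀ * V = 1) (hd : ∀ i, 0 < d i)
    (hL0 : L0 = U * Matrix.diagonal d * Vᵀ)
    (hM : M = L0 + S0)
    (Q : Submodule ℝ (Mat n)) (τ lam : ℝ) (hτ : 0 < τ) (hlam0 : 0 < lam) (hlam1 : lam < 1)
    (PQ PT PΩ PΩperp PTperp PΓperp : Mat n →ₗ[ℝ] Mat n)
    (hPQ : IsOrthProj Q PQ)
    (hPT : IsOrthProj (tangentT U V) PT)
    (hPΩ : IsOrthProj (suppSub S0) PΩ)
    (hPΩperp : IsOrthProj (orthComp (suppSub S0)) PΩperp)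
    (hPTperp : IsOrthProj (orthComp (tangentT U V)) PTperp)
    (hPΓperp : IsOrthProj (orthComp (Q ⊓ orthComp (tangentT U V))) PΓperp)
    (hop : opNorm (PΩ ∘ₗ PΓperp) ≤ 1 / 2)
    (W F D : Mat n) (α β : ℝ) (hα : 0 < α) (hβ : 0 < β)
    (heq : U * Vᵀ + W + (1 / τ) • L0 = lam • (sgnMat S0 + F + PΩ D) + (1 / τ) • S0)
    (hmemQ : U * Vᵀ + W + (1 / τ) • L0 ∈ Q)
    (hW1 : PT W = 0) (hW2 : specNorm W ≤ β)
    (hF1 : PΩ F = 0) (hF2 : linfNorm F ≤ β)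
    (hD : fnorm (PΩ D) ≤ α) :
    ∀ HL HS : Mat n, PQ HL = PQ HS →
      nucNorm (L0 + HL) + lam * l1Norm (S0 - HS) + 1 / (2 * τ) * fnorm (L0 + HL) ^ 2 +
          1 / (2 * τ) * fnorm (S0 - HS) ^ 2 ≥
        (nucNorm L0 + lam * l1Norm S0 + 1 / (2 * τ) * fnorm L0 ^ 2 +
            1 / (2 * τ) * fnorm S0 ^ 2) +
          (1 - β - 2 * α * lam) * nucNorm (PTperp HL) +
          (1 - β - α) * lam * l1Norm (PΩperp HS) := by
  intro HL HS hQeq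
  classical
  have hPΩap : ∀ Z, PΩ Z = maskS S0 Z := fun Z => PΩ_apply hPΩ Z
  have hPΩperpap : ∀ Z, PΩperp Z = maskZ S0 Z := fun Z => PΩperp_apply hPΩperp Z
  set B := PTperp HL with hBdef
  have hBmem : B ∈ orthComp (tangentT U V) := hPTperp.1 HL
  have hUB : Uᵀ * B = 0 := orthComp_tangent_left U V B hBmem
  have hBV : B * V = 0 := orthComp_tangent_right U V B hBmem
  obtain ⟨W0, hW0X, hW0spec, hW0mem⟩ := dual_exists B U V hU hV hUB hBV
  have hL0T : L0 ∈ tangentT U V := by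
    refine ⟨V * Matrix.diagonal d, 0, ?_⟩
    rw [Matrix.zero_mul, add_zero, Matrix.transpose_mul, Matrix.diagonal_transpose,
      hL0, Matrix.mul_assoc]
  -- nuclear part
  have step1 : finner (U * Vᵀ + W0) (L0 + HL) ≤ nucNorm (L0 + HL) := by
    calc finner (U * Vᵀ + W0) (L0 + HL)
        ≤ specNorm (U * Vᵀ + W0) * nucNorm (L0 + HL) := finner_le_specNorm_mul_nucNorm _ _
      _ ≤ 1 * nucNorm (L0 + HL) := mul_le_mul_of_nonneg_right hW0spec (nucNorm_nonneg _)
      _ = nucNorm (L0 + HL) := one_mul _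
  have hUVL0 : finner (U * Vᵀ) L0 = ∑ i, d i := by
    rw [hL0, finner_eq_trace, Matrix.transpose_mul, Matrix.transpose_transpose,
      Matrix.mul_assoc U (Matrix.diagonal d) Vᵀ]
    have e : V * Uᵀ * (U * (Matrix.diagonal d * Vᵀ)) = V * (Matrix.diagonal d * Vᵀ) := by
      rw [Matrix.mul_assoc V Uᵀ _, ← Matrix.mul_assoc Uᵀ U _, hU, Matrix.one_mul]
    rw [e, Matrix.trace_mul_comm, Matrix.mul_assoc, hV, Matrix.mul_one, Matrix.trace_diagonal]
  have hW0L0 : finner W0 L0 = 0 := hW0mem L0 hL0T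
  have hW0HL : finner W0 HL = nucNorm B := by
    have e : HL = B + (HL - B) := by abel
    have hz : finner W0 (HL - B) = 0 := by
      rw [finner_comm]
      exact hPTperp.2.2 HL W0 hW0mem
    calc finner W0 HL = finner W0 (B + (HL - B)) := by rw [← e]
      _ = finner W0 B + finner W0 (HL - B) := finner_add_right _ _ _
      _ = nucNorm B := by rw [hz, hW0X, add_zero]
  have hexpand : finner (U * Vᵀ + W0) (L0 + HL)
      = finner (U * Vᵀ) L0 + finner W0 L0 + finner (U * Vᵀ) HL + finner W0 HL := by
    rw [finner_add_left, finner_add_right, finner_add_right]; ring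
  have hnucL0 : nucNorm L0 ≤ ∑ i, d i := by
    rw [hL0]; exact nucNorm_UdV_le U V d hU hV (fun i => le_of_lt (hd i))
  have hnuc_main : nucNorm L0 + finner (U * Vᵀ) HL + nucNorm B ≤ nucNorm (L0 + HL) := by
    rw [hexpand, hUVL0, hW0L0, hW0HL] at step1
    linarith
  -- l1 part
  have hl1_main : l1Norm S0 - finner (sgnMat S0) HS + l1Norm (maskZ S0 HS)
      ≤ l1Norm (S0 - HS) := l1_lower S0 HS
  -- quadratic parts
  have hq1 : fnorm L0 ^ 2 + 2 * finner L0 HL ≤ fnorm (L0 + HL) ^ 2 := by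
    have e : fnorm (L0 + HL) ^ 2 = fnorm L0 ^ 2 + 2 * finner L0 HL + fnorm HL ^ 2 := by
      rw [fnorm_sq, fnorm_sq, fnorm_sq, finner_add_left, finner_add_right, finner_add_right,
        finner_comm HL L0]
      ring
    linarith [sq_nonneg (fnorm HL)]
  have hq2 : fnorm S0 ^ 2 - 2 * finner S0 HS ≤ fnorm (S0 - HS) ^ 2 := by
    have e : fnorm (S0 - HS) ^ 2 = fnorm S0 ^ 2 - 2 * finner S0 HS + fnorm HS ^ 2 := by
      rw [fnorm_sq, fnorm_sq, fnorm_sq, finner_sub_left, finner_sub_right, finner_sub_right,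
        finner_comm HS S0]
      ring
    linarith [sq_nonneg (fnorm HS)]
  -- orthogonality key identity
  have hPQ0 : PQ (HL - HS) = 0 := by rw [map_sub, hQeq, sub_self]
  have horth : finner (HL - HS) (U * Vᵀ + W + (1 / τ) • L0) = 0 := by
    have h := hPQ.2.2 (HL - HS) (U * Vᵀ + W + (1 / τ) • L0) hmemQ
    rw [hPQ0, sub_zero] at h
    exact h
  have key : finner (U * Vᵀ) HL + finner W HL + (1 / τ) * finner L0 HL
      = lam * finner (sgnMat S0) HS + lam * finner F HS + lam * finner (PΩ D) HS
        + (1 / τ) * finner S0 HS := by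
    have h2 : finner HL (U * Vᵀ + W + (1 / τ) • L0)
        = finner (U * Vᵀ) HL + finner W HL + (1 / τ) * finner L0 HL := by
      rw [finner_add_right, finner_add_right, finner_smul_right,
        finner_comm HL (U * Vᵀ), finner_comm HL W, finner_comm HL L0]
    have h3 : finner HS (U * Vᵀ + W + (1 / τ) • L0)
        = lam * finner (sgnMat S0) HS + lam * finner F HS + lam * finner (PΩ D) HS
          + (1 / τ) * finner S0 HS := by
      rw [heq, finner_add_right, finner_smul_right, finner_smul_right,
        finner_add_right, finner_add_right,
        finner_comm HS (sgnMat S0), finner_comm HS F, finner_comm HS (PΩ D),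
        finner_comm HS S0]
      ring
    rw [finner_sub_left, h2, h3] at horth
    linarith
  -- W bounds
  have hWmem : W ∈ orthComp (tangentT U V) := by
    intro Y hY
    have h := hPT.2.2 W Y hY
    rw [hW1, sub_zero] at h
    exact h
  have hWHL : finner W HL = finner W B := by
    have e : HL = B + (HL - B) := by abel
    have hz : finner W (HL - B) = 0 := by
      rw [finner_comm]
      exact hPTperp.2.2 HL W hWmem
    calc finner W HL = finner W (B + (HL - B)) := by rw [← e]
      _ = finner W B + finner W (HL - B) := finner_add_right _ _ _
      _ = finner W B := by rw [hz, add_zero]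
  have hWbd : finner W B ≤ β * nucNorm B := by
    have h := abs_finner_le_specNorm_mul_nucNorm W B
    have h2 : specNorm W * nucNorm B ≤ β * nucNorm B :=
      mul_le_mul_of_nonneg_right hW2 (nucNorm_nonneg _)
    have h3 := (abs_le.mp h).2
    linarith
  -- F bounds
  have hFmem : F ∈ orthComp (suppSub S0) := by
    intro Y hY
    have h := hPΩ.2.2 F Y hY
    rw [hF1, sub_zero] at h
    exact h
  have hFHS : finner F HS = finner F (maskZ S0 HS) := by
    calc finner F HS = finner F (maskS S0 HS + maskZ S0 HS) := by rw [maskS_add_maskZ]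
      _ = finner F (maskS S0 HS) + finner F (maskZ S0 HS) := finner_add_right _ _ _
      _ = finner F (maskZ S0 HS) := by rw [hFmem _ (maskS_mem S0 HS), zero_add]
  have hFbd : -(β * l1Norm (maskZ S0 HS)) ≤ finner F (maskZ S0 HS) := by
    have h := abs_finner_le_linf_mul_l1 F (maskZ S0 HS)
    have h2 : linfNorm F * l1Norm (maskZ S0 HS) ≤ β * l1Norm (maskZ S0 HS) :=
      mul_le_mul_of_nonneg_right hF2 (l1Norm_nonneg _)
    have h3 := (abs_le.mp h).1
    linarith
  -- PΩ D bounds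
  have hDHS : finner (PΩ D) HS = finner (maskS S0 D) (maskS S0 HS) := by
    rw [hPΩap D]
    calc finner (maskS S0 D) HS
        = finner (maskS S0 D) (maskS S0 HS + maskZ S0 HS) := by rw [maskS_add_maskZ]
      _ = finner (maskS S0 D) (maskS S0 HS) + finner (maskS S0 D) (maskZ S0 HS) :=
          finner_add_right _ _ _
      _ = finner (maskS S0 D) (maskS S0 HS) := by
          have hz : finner (maskS S0 D) (maskZ S0 HS) = 0 := by
            rw [finner_comm]
            exact finner_maskZ_eq_zero S0 HS _ (maskS_mem S0 D)
          rw [hz, add_zero]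
  have hDnorm : fnorm (maskS S0 D) ≤ α := by rw [← hPΩap D]; exact hD
  -- K chain
  have hGmem : HL - HS ∈ orthComp (Q ⊓ orthComp (tangentT U V)) := by
    intro Y hY
    have h := hPQ.2.2 (HL - HS) Y hY.1
    rw [hPQ0, sub_zero] at h
    exact h
  have hfix1 : PΓperp (HL - HS) = HL - HS := hPΓperp.2.1 _ hGmem
  have hAmem : HL - B ∈ orthComp (Q ⊓ orthComp (tangentT U V)) := by
    intro Y hY
    exact hPTperp.2.2 HL Y hY.2
  have hfix2 : PΓperp (HL - B) = HL - B := hPΓperp.2.1 _ hAmem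
  have hK : HS - PΓperp HS = B - PΓperp B := by
    have e1 : PΓperp HL = PΓperp HS + (HL - HS) := by
      have e : PΓperp HL = PΓperp HS + PΓperp (HL - HS) := by
        rw [← map_add]; congr 1; abel
      rw [e, hfix1]
    have e2 : PΓperp HL = (HL - B) + PΓperp B := by
      have e : PΓperp HL = PΓperp (HL - B) + PΓperp B := by
        rw [← map_add]; congr 1; abel
      rw [e, hfix2]
    have h : PΓperp HS + (HL - HS) = (HL - B) + PΓperp B := e1.symm.trans e2
    have h2 : PΓperp HS = (HL - B) + PΓperp B - (HL - HS) := by rw [← h]; abel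
    rw [h2]; abel
  have hcontr : ∀ Z, fnorm ((PΩ ∘ₗ PΓperp) Z) ≤ fnorm Z := by
    intro Z
    have e : (PΩ ∘ₗ PΓperp) Z = maskS S0 (PΓperp Z) := by
      rw [LinearMap.comp_apply, hPΩap]
    rw [e]
    calc fnorm (maskS S0 (PΓperp Z)) ≤ fnorm (PΓperp Z) := fnorm_maskS_le _ _
      _ ≤ fnorm Z := proj_fnorm_le hPΓperp Z
  have hhalf : fnorm (maskS S0 (PΓperp HS)) ≤ 1 / 2 * fnorm HS := by
    have h := opNorm_apply_le hcontr hop HS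
    rw [LinearMap.comp_apply, hPΩap] at h
    exact h
  have hmaskdec : maskS S0 HS = maskS S0 (PΓperp HS) + maskS S0 (HS - PΓperp HS) := by
    ext i j
    by_cases h : S0 i j = 0 <;>
      simp [maskS, h, Matrix.add_apply, Matrix.sub_apply]
  have hforb : fnorm (maskS S0 HS) ≤ l1Norm (maskZ S0 HS) + 2 * nucNorm B := by
    have h1 : fnorm (maskS S0 HS)
        ≤ fnorm (maskS S0 (PΓperp HS)) + fnorm (maskS S0 (HS - PΓperp HS)) := by
      calc fnorm (maskS S0 HS)
          = fnorm (maskS S0 (PΓperp HS) + maskS S0 (HS - PΓperp HS)) := by rw [← hmaskdec]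
        _ ≤ _ := fnorm_add_le _ _
    have h2 : fnorm (maskS S0 (HS - PΓperp HS)) ≤ fnorm B := by
      calc fnorm (maskS S0 (HS - PΓperp HS)) ≤ fnorm (HS - PΓperp HS) := fnorm_maskS_le _ _
        _ = fnorm (B - PΓperp B) := by rw [hK]
        _ ≤ fnorm B := proj_compl_fnorm_le hPΓperp B
    have h3 : fnorm HS ≤ fnorm (maskS S0 HS) + fnorm (maskZ S0 HS) :=
      fnorm_le_fnorm_maskS_add_maskZ S0 HS
    have h4 : fnorm (maskZ S0 HS) ≤ l1Norm (maskZ S0 HS) := fnorm_le_l1Norm _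
    have h5 : fnorm B ≤ nucNorm B := fnorm_le_nucNorm B
    linarith
  have hDbd : -(α * (l1Norm (maskZ S0 HS) + 2 * nucNorm B))
      ≤ finner (maskS S0 D) (maskS S0 HS) := by
    have h := finner_abs_le (maskS S0 D) (maskS S0 HS)
    have h3 := (abs_le.mp h).1
    have hprod : fnorm (maskS S0 D) * fnorm (maskS S0 HS)
        ≤ α * (l1Norm (maskZ S0 HS) + 2 * nucNorm B) :=
      mul_le_mul hDnorm hforb (fnorm_nonneg _) (le_of_lt hα)
    linarith
  -- final assembly
  rw [hPΩperpap HS]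
  have hq1' : 1 / (2 * τ) * fnorm L0 ^ 2 + (1 / τ) * finner L0 HL
      ≤ 1 / (2 * τ) * fnorm (L0 + HL) ^ 2 := by
    have hpos : (0:ℝ) ≤ 1 / (2 * τ) := by positivity
    have h := mul_le_mul_of_nonneg_left hq1 hpos
    have e : 1 / (2 * τ) * (fnorm L0 ^ 2 + 2 * finner L0 HL)
        = 1 / (2 * τ) * fnorm L0 ^ 2 + (1 / τ) * finner L0 HL := by
      field_simp
    linarith [h, e.symm.le, e.le]
  have hq2' : 1 / (2 * τ) * fnorm S0 ^ 2 - (1 / τ) * finner S0 HS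
      ≤ 1 / (2 * τ) * fnorm (S0 - HS) ^ 2 := by
    have hpos : (0:ℝ) ≤ 1 / (2 * τ) := by positivity
    have h := mul_le_mul_of_nonneg_left hq2 hpos
    have e : 1 / (2 * τ) * (fnorm S0 ^ 2 - 2 * finner S0 HS)
        = 1 / (2 * τ) * fnorm S0 ^ 2 - (1 / τ) * finner S0 HS := by
      field_simp
    linarith [h, e.symm.le, e.le]
  have hl1' : lam * l1Norm S0 - lam * finner (sgnMat S0) HS + lam * l1Norm (maskZ S0 HS)
      ≤ lam * l1Norm (S0 - HS) := by
    have h := mul_le_mul_of_nonneg_left hl1_main (le_of_lt hlam0)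
    rw [mul_add, mul_sub] at h
    exact h
  have hFbd' : -(lam * (β * l1Norm (maskZ S0 HS))) ≤ lam * finner F (maskZ S0 HS) := by
    have h := mul_le_mul_of_nonneg_left hFbd (le_of_lt hlam0)
    rw [mul_neg] at h
    exact h
  have hWscaled : finner W HL ≤ β * nucNorm B := by rw [hWHL]; exact hWbd
  have hDbd' : -(lam * (α * (l1Norm (maskZ S0 HS) + 2 * nucNorm B)))
      ≤ lam * finner (PΩ D) HS := by
    rw [hDHS]
    have h := mul_le_mul_of_nonneg_left hDbd (le_of_lt hlam0)
    rw [mul_neg] at h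
    exact h
  have hFHS' : lam * finner F HS = lam * finner F (maskZ S0 HS) := by rw [hFHS]
  linarith [hnuc_main, hl1', hq1', hq2', key, hWscaled, hFbd', hDbd', hFHS']
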